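/- For an oriented hypergraph G with Laplacian L_G, perm(L_G) = ∑_{c ∈ C(G)} (−1)^{oc(c)+nc(c)} and det(L_G) = ∑_{c ∈ C(G)} (−1)^{pc(c)}, where C(G) is the set of contributors of G, and oc(c), nc(c), pc(c) are the numbers of odd, negative, and positive circles in the image of c respectively. -/

import Mathlib

open scoped Classical

/-- An oriented hypergraph on vertex set `V`: edges `E`, incidences `I`,
incidence function given by `vtx` and `edge`, and incidence orientations `sgn`. -/
structure OrientedHypergraph (V : Type) [Fintype V] [DecidableEq V] where
  E : Type
  I : Type
  [fintypeE : Fintype E]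
  [fintypeI : Fintype I]
  [decEqI : DecidableEq I]
  vtx : I → V
  edge : I → E
  sgn : I → ℤ

attribute [instance] OrientedHypergraph.fintypeE OrientedHypergraph.fintypeI
  OrientedHypergraph.decEqI

variable {V : Type} [Fintype V] [DecidableEq V]

/-- A bidirected graph: an oriented hypergraph in which every edge has exactly two
incidences, recorded by the fixed-point-free involution `τ` pairing the two
incidences of each edge. -/
structure Bidirected (V : Type) [Fintype V] [DecidableEq V]
    extends OrientedHypergraph V where
  τ : I → I
  τ_invol : ∀ i, τ (τ i) = i
  τ_ne : ∀ i, τ i ≠ i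
  τ_edge : ∀ i, edge (τ i) = edge i
  edge_two : ∀ i j, edge i = edge j → j = i ∨ j = τ i

/-- A pre-contributor: an incidence-preserving map of `|V|` disjoint directed paths
of length one into `G`, sending the tail `t_v` to `v`.  The component at `v` is the
weak walk with tail incidence `i1 v` and head incidence `i2 v`. -/
structure PreContributor (G : OrientedHypergraph V) where
  i1 : V → G.I
  i2 : V → G.I
  tail_eq : ∀ v, G.vtx (i1 v) = v
  edge_eq : ∀ v, G.edge (i1 v) = G.edge (i2 v)

namespace PreContributor

variable {G : OrientedHypergraph V}

/-- The head vertex of the component of `p` at `v`: `p(h_v)`. -/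
def head (p : PreContributor G) (v : V) : V := G.vtx (p.i2 v)

/-- A contributor: a pre-contributor whose heads cover `V`, `{p(h_v) | v ∈ V} = V`. -/
def IsContributor (p : PreContributor G) : Prop := Function.Surjective p.head

/-- The component of `p` at `v` is a backstep `(v,i,e,i,v)`. -/
def BackstepAt (p : PreContributor G) (v : V) : Prop := p.i2 v = p.i1 v

/-- The sign of the length-one weak walk of `p` at `v`. -/
def walkSign (p : PreContributor G) (v : V) : ℤ := -(G.sgn (p.i1 v) * G.sgn (p.i2 v))

/-- Two vertices lie in the same component of the image of `p`. -/
def compRel (p : PreContributor G) : V → V → Prop :=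
  Relation.EqvGen (fun v w => p.head v = w)

/-- The setoid of components of `p`. -/
def compSetoid (p : PreContributor G) : Setoid V := Relation.EqvGen.setoid (fun v w => p.head v = w)

/-- A component class is a (lone) backstep. -/
def IsBackstepClass (p : PreContributor G) (q : Quotient p.compSetoid) : Prop :=
  ∃ v, Quotient.mk p.compSetoid v = q ∧ p.head v = v ∧ p.BackstepAt v

/-- The number of vertices in a component class. -/
noncomputable def compCard (p : PreContributor G) (q : Quotient p.compSetoid) : ℕ :=
  Nat.card {v : V // Quotient.mk p.compSetoid v = q}

/-- The sign of a component class: the product of the signs of its weak walks. -/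
noncomputable def compSign (p : PreContributor G) (q : Quotient p.compSetoid) : ℤ :=
  ∏ᶠ v ∈ {v : V | Quotient.mk p.compSetoid v = q}, p.walkSign v

/-- `tc`: total number of circles of a contributor (backsteps do not count). -/
noncomputable def tc (p : PreContributor G) : ℕ :=
  Nat.card {q : Quotient p.compSetoid // ¬ p.IsBackstepClass q}

/-- `pc`: number of positive circles of a contributor. -/
noncomputable def pc (p : PreContributor G) : ℕ :=
  Nat.card {q : Quotient p.compSetoid // ¬ p.IsBackstepClass q ∧ p.compSign q = 1}

/-- `nc`: number of negative circles of a contributor. -/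
noncomputable def nc (p : PreContributor G) : ℕ :=
  Nat.card {q : Quotient p.compSetoid // ¬ p.IsBackstepClass q ∧ p.compSign q = -1}

/-- `oc`: number of odd circles of a contributor. -/
noncomputable def oc (p : PreContributor G) : ℕ :=
  Nat.card {q : Quotient p.compSetoid // ¬ p.IsBackstepClass q ∧ Odd (p.compCard q)}

/-- `ec`: number of even circles of a contributor. -/
noncomputable def ec (p : PreContributor G) : ℕ :=
  Nat.card {q : Quotient p.compSetoid // ¬ p.IsBackstepClass q ∧ Even (p.compCard q)}

end PreContributor

/-- The `V × E` incidence matrix of an oriented hypergraph. -/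
noncomputable def OrientedHypergraph.inc (G : OrientedHypergraph V) : Matrix V G.E ℤ :=
  fun v e => ∑ᶠ i ∈ {i : G.I | G.vtx i = v ∧ G.edge i = e}, G.sgn i

/-- The oriented hypergraphic Laplacian `L_G = H_G H_Gᵀ`. -/
noncomputable def OrientedHypergraph.lap (G : OrientedHypergraph V) : Matrix V V ℤ :=
  G.inc * G.inc.transpose

namespace Bidirected

variable {G : Bidirected V}

/-- Packing the directed adjacency of `p` at `v` into a backstep. -/
def pack (G : Bidirected V) (p : PreContributor G.toOrientedHypergraph) (v : V) :
    PreContributor G.toOrientedHypergraph where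
  i1 := p.i1
  i2 := fun u => if u = v then p.i1 v else p.i2 u
  tail_eq := p.tail_eq
  edge_eq := fun u => by by_cases h : u = v <;> simp [h, p.edge_eq u]

/-- Unpacking the backstep of `p` at `v` into the unique directed adjacency out of
`v` completing the edge. -/
def unpack (G : Bidirected V) (p : PreContributor G.toOrientedHypergraph) (v : V) :
    PreContributor G.toOrientedHypergraph where
  i1 := p.i1
  i2 := fun u => if u = v then G.τ (p.i1 v) else p.i2 u
  tail_eq := p.tail_eq
  edge_eq := fun u => by
    by_cases h : u = v
    · simp [h, G.τ_edge]
    · simp [h, p.edge_eq u]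

end Bidirected
namespace LapAux

open PreContributor Finset

variable {V : Type} [Fintype V] [DecidableEq V] {G : OrientedHypergraph V}

noncomputable instance : Fintype (PreContributor G) :=
  Fintype.ofInjective (fun p => (p.i1, p.i2)) (by
    rintro ⟨a1, a2, _, _⟩ ⟨b1, b2, _, _⟩ h
    simp only [Prod.mk.injEq] at h
    obtain ⟨h1, h2⟩ := h
    subst h1; subst h2; rfl)

/-- The finset of incidence pairs realizing entry `(u,w)` of the Laplacian. -/
noncomputable def P (G : OrientedHypergraph V) (u w : V) : Finset (G.I × G.I) :=
  Finset.univ.filter fun ij => G.vtx ij.1 = u ∧ G.vtx ij.2 = w ∧ G.edge ij.1 = G.edge ij.2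

lemma inc_eq (u : V) (e : G.E) :
    G.inc u e = ∑ i ∈ Finset.univ.filter (fun i => G.vtx i = u ∧ G.edge i = e), G.sgn i := by
  rw [OrientedHypergraph.inc, ← finsum_mem_coe_finset]
  congr 1
  ext i
  simp

lemma lap_apply (u w : V) :
    G.lap u w = ∑ ij ∈ P G u w, G.sgn ij.1 * G.sgn ij.2 := by
  rw [OrientedHypergraph.lap, Matrix.mul_apply]
  rw [← Finset.sum_fiberwise_of_maps_to (g := fun ij : G.I × G.I => G.edge ij.1)
      (t := Finset.univ) (fun _ _ => Finset.mem_univ _)]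
  refine Finset.sum_congr rfl fun e _ => ?_
  rw [Matrix.transpose_apply, inc_eq, inc_eq, Finset.sum_mul_sum]
  rw [← Finset.sum_product']
  refine Finset.sum_congr ?_ fun _ _ => rfl
  ext ⟨i, j⟩
  simp only [Finset.mem_product, Finset.mem_filter, Finset.mem_univ, true_and, P]
  constructor
  · rintro ⟨⟨h1, h2⟩, h3, h4⟩
    exact ⟨⟨h1, h3, h2.trans h4.symm⟩, h2⟩
  · rintro ⟨⟨h1, h3, h24⟩, h2⟩
    exact ⟨⟨h1, h2⟩, h3, h24.symm.trans h2⟩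

/-- Build a pre-contributor from a function choosing incidence pairs. -/
def ofFun (g : V → G.I × G.I) (h1 : ∀ v, G.vtx (g v).1 = v)
    (h2 : ∀ v, G.edge (g v).1 = G.edge (g v).2) : PreContributor G :=
  ⟨fun v => (g v).1, fun v => (g v).2, h1, h2⟩

lemma prod_lap (π : Equiv.Perm V) :
    ∏ v, G.lap v (π v) =
      ∑ c ∈ Finset.univ.filter (fun c : PreContributor G => c.head = ⇑π),
        ∏ v, G.sgn (c.i1 v) * G.sgn (c.i2 v) := by
  simp_rw [lap_apply]
  rw [Finset.prod_univ_sum]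
  refine Finset.sum_bij (fun g hg => ofFun g
      (fun v => ((Finset.mem_filter.1 ((Fintype.mem_piFinset).1 hg v)).2).1)
      (fun v => ((Finset.mem_filter.1 ((Fintype.mem_piFinset).1 hg v)).2).2.2))
    ?_ ?_ ?_ ?_
  · intro g hg
    simp only [Finset.mem_filter, Finset.mem_univ, true_and]
    funext v
    exact ((Finset.mem_filter.1 ((Fintype.mem_piFinset).1 hg v)).2).2.1
  · intro g hg g' hg' h
    funext v
    have h1 : (ofFun g _ _ : PreContributor G).i1 = _ := congrArg PreContributor.i1 h
    have h2 := congrArg PreContributor.i2 h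
    exact Prod.ext (congrFun h1 v) (congrFun h2 v)
  · intro c hc
    simp only [Finset.mem_filter, Finset.mem_univ, true_and] at hc
    refine ⟨fun v => (c.i1 v, c.i2 v), ?_, ?_⟩
    · rw [Fintype.mem_piFinset]
      intro v
      simp only [P, Finset.mem_filter, Finset.mem_univ, true_and]
      exact ⟨c.tail_eq v, by rw [← hc]; rfl, c.edge_eq v⟩
    · cases c; rfl
  · intro g hg
    rfl

section PerContributor

variable (c : PreContributor G)

/-- The permutation associated to a contributor. -/
noncomputable def permOf (c : PreContributor G) : Equiv.Perm V :=
  if h : Function.Bijective c.head then Equiv.ofBijective c.head h else 1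

lemma isContributor_of_head_eq {σ : Equiv.Perm V} (h : c.head = ⇑σ) : c.IsContributor := by
  rw [PreContributor.IsContributor, h]; exact σ.surjective

lemma permOf_coe (hc : c.IsContributor) : ⇑(permOf c) = c.head := by
  have hb : Function.Bijective c.head := Finite.surjective_iff_bijective.1 hc
  rw [permOf, dif_pos hb]; rfl

lemma permOf_eq {σ : Equiv.Perm V} (h : c.head = ⇑σ) : permOf c = σ := by
  have hc := isContributor_of_head_eq c h
  exact Equiv.coe_fn_injective ((permOf_coe c hc).trans h)

lemma mk_eq_mk_iff (hc : c.IsContributor) (u v : V) :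
    (Quotient.mk c.compSetoid u = Quotient.mk c.compSetoid v) ↔ (permOf c).SameCycle u v := by
  rw [Quotient.eq]
  show Relation.EqvGen _ u v ↔ _
  constructor
  · intro h
    induction h with
    | rel x y hxy => exact ⟨1, by simpa [permOf_coe c hc] using hxy⟩
    | refl x => exact Equiv.Perm.SameCycle.refl _ _
    | symm _ _ _ ih => exact ih.symm
    | trans _ _ _ _ _ ih1 ih2 => exact ih1.trans ih2
  · intro h
    obtain ⟨i, -, -, hi⟩ := h.exists_pow_eq (permOf c)
    subst hi
    clear h
    induction i with
    | zero => simpa using Relation.EqvGen.refl u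
    | succ n ih =>
        refine Relation.EqvGen.trans _ _ _ ih (Relation.EqvGen.rel _ _ ?_)
        show c.head _ = _
        rw [← permOf_coe c hc, pow_succ']
        rfl

/-- The fiber of a component class as a finset. -/
noncomputable def fib (c : PreContributor G) (q : Quotient c.compSetoid) : Finset V :=
  Finset.univ.filter fun v => Quotient.mk c.compSetoid v = q

lemma compCard_eq (q : Quotient c.compSetoid) : c.compCard q = (fib c q).card := by
  rw [PreContributor.compCard, Nat.card_eq_fintype_card, Fintype.card_subtype]
  rfl

lemma compSign_eq (q : Quotient c.compSetoid) :
    c.compSign q = ∏ v ∈ fib c q, c.walkSign v := by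
  rw [PreContributor.compSign, ← finprod_mem_coe_finset]
  congr 1
  ext v
  simp [fib]

lemma fixed_class_eq (hc : c.IsContributor) {v : V} (hv : c.head v = v) {u : V}
    (hu : Quotient.mk c.compSetoid u = Quotient.mk c.compSetoid v) : u = v := by
  rw [mk_eq_mk_iff c hc] at hu
  obtain ⟨i, -, -, hi⟩ := hu.symm.exists_pow_eq (permOf c)
  rw [Equiv.Perm.pow_apply_eq_self_of_apply_eq_self (by rw [permOf_coe c hc]; exact hv)] at hi
  exact hi.symm

lemma fib_fixed (hc : c.IsContributor) {v : V} (hv : c.head v = v) :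
    fib c (Quotient.mk c.compSetoid v) = {v} := by
  ext u
  simp only [fib, Finset.mem_filter, Finset.mem_univ, true_and, Finset.mem_singleton]
  exact ⟨fun h => fixed_class_eq c hc hv h, fun h => by rw [h]⟩

end PerContributor

section Counting

variable (c : PreContributor G)

lemma natCard_subtype {α : Type*} [Fintype α] (p : α → Prop) :
    Nat.card {x // p x} = (Finset.univ.filter p).card := by
  rw [Nat.card_eq_fintype_card, Fintype.card_subtype]

lemma neg_one_pow_congr {a b : ℕ} (h : a % 2 = b % 2) : ((-1 : ℤ)) ^ a = (-1) ^ b := by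
  rw [neg_one_pow_eq_pow_mod_two, h, ← neg_one_pow_eq_pow_mod_two]

lemma sum_card_parity {α : Type*} (s : Finset α) (f : α → ℕ) :
    (∑ a ∈ s, f a) % 2 = (s.filter fun a => Odd (f a)).card % 2 := by
  rw [Finset.sum_nat_mod]
  congr 1
  have : ∀ a ∈ s, f a % 2 = if Odd (f a) then 1 else 0 := by
    intro a _
    by_cases h : Odd (f a)
    · rw [if_pos h, Nat.odd_iff.1 h]
    · rw [if_neg h, Nat.even_iff.1 (Nat.not_odd_iff_even.1 h)]
  rw [Finset.sum_congr rfl this]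
  simpa using (Finset.sum_boole (fun a => Odd (f a)) s (α := ℕ))

lemma walkSign_pm (hsgn : ∀ i, G.sgn i = 1 ∨ G.sgn i = -1) (v : V) :
    c.walkSign v = 1 ∨ c.walkSign v = -1 := by
  rcases hsgn (c.i1 v) with h1 | h1 <;> rcases hsgn (c.i2 v) with h2 | h2 <;>
    simp [PreContributor.walkSign, h1, h2]

lemma prod_walkSign_pm (hsgn : ∀ i, G.sgn i = 1 ∨ G.sgn i = -1) (s : Finset V) :
    (∏ v ∈ s, c.walkSign v) = 1 ∨ (∏ v ∈ s, c.walkSign v) = -1 := by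
  induction s using Finset.induction with
  | empty => left; simp
  | @insert a s h ih =>
      rw [Finset.prod_insert h]
      rcases walkSign_pm c hsgn _ with h1 | h1 <;> rcases ih with h2 | h2 <;>
        rw [h1, h2] <;> norm_num

lemma compSign_pm (hsgn : ∀ i, G.sgn i = 1 ∨ G.sgn i = -1) (q : Quotient c.compSetoid) :
    c.compSign q = 1 ∨ c.compSign q = -1 := by
  rw [compSign_eq]; exact prod_walkSign_pm c hsgn _

lemma backstep_sign (hsgn : ∀ i, G.sgn i = 1 ∨ G.sgn i = -1) (hc : c.IsContributor)
    {q : Quotient c.compSetoid} (hq : c.IsBackstepClass q) :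
    c.compSign q = -1 ∧ (fib c q).card = 1 := by
  obtain ⟨v, rfl, hfix, hbs⟩ := hq
  have hf := fib_fixed c hc hfix
  refine ⟨?_, by rw [hf]; simp⟩
  rw [compSign_eq, hf, Finset.prod_singleton, PreContributor.walkSign, hbs]
  rcases hsgn (c.i1 v) with h | h <;> rw [h] <;> norm_num

lemma card_univ_eq_sum_fib :
    Fintype.card V = ∑ q : Quotient c.compSetoid, (fib c q).card := by
  rw [← Finset.card_univ]
  exact Finset.card_eq_sum_card_fiberwise fun v _ => Finset.mem_univ _

lemma prod_walkSign_eq :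
    (∏ v, c.walkSign v) = ∏ q : Quotient c.compSetoid, c.compSign q := by
  simp_rw [compSign_eq]
  exact (Finset.prod_fiberwise_of_maps_to (fun v _ => Finset.mem_univ _) _).symm

end Counting

section Cycles

open Equiv Equiv.Perm

variable (c : PreContributor G)

/-- Classes containing a fixed point of the head map. -/
noncomputable def FixedCl (c : PreContributor G) : Finset (Quotient c.compSetoid) :=
  Finset.univ.filter fun q => ∃ v, Quotient.mk c.compSetoid v = q ∧ c.head v = v

lemma card_fixedCl (hc : c.IsContributor) :
    (FixedCl c).card + (permOf c).support.card = Fintype.card V := by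
  have h1 : (Finset.univ.filter fun v => c.head v = v) = (permOf c).supportᶜ := by
    ext v
    simp [Equiv.Perm.mem_support, permOf_coe c hc]
  have h2 : (Finset.univ.filter fun v => c.head v = v).card = (FixedCl c).card := by
    refine Finset.card_bij (fun v _ => Quotient.mk c.compSetoid v) ?_ ?_ ?_
    · intro v hv
      simp only [Finset.mem_filter, Finset.mem_univ, true_and] at hv
      simp only [FixedCl, Finset.mem_filter, Finset.mem_univ, true_and]
      exact ⟨v, rfl, hv⟩
    · intro u hu v hv h
      simp only [Finset.mem_filter, Finset.mem_univ, true_and] at hu hv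
      exact fixed_class_eq c hc hv h
    · intro q hq
      simp only [FixedCl, Finset.mem_filter, Finset.mem_univ, true_and] at hq
      obtain ⟨v, hv, hfix⟩ := hq
      exact ⟨v, by simp [hfix], hv⟩
  rw [← h2, h1, Finset.card_compl]
  have := (permOf c).support.card_le_univ
  omega

lemma card_nontrivialCl (hc : c.IsContributor) :
    (Finset.univ.filter fun q : Quotient c.compSetoid =>
        ¬ ∃ v, Quotient.mk c.compSetoid v = q ∧ c.head v = v).card =
      (permOf c).cycleFactorsFinset.card := by
  set π := permOf c with hπ
  refine Finset.card_bij (fun q _ => π.cycleOf q.out) ?_ ?_ ?_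
  · intro q hq
    simp only [Finset.mem_filter, Finset.mem_univ, true_and] at hq
    rw [cycleOf_mem_cycleFactorsFinset_iff, mem_support]
    intro hfix
    exact hq ⟨q.out, q.out_eq, by rw [← permOf_coe c hc]; exact hfix⟩
  · intro q1 hq1 q2 hq2 h
    simp only [Finset.mem_filter, Finset.mem_univ, true_and] at hq1 hq2
    have hs2 : π q2.out ≠ q2.out := by
      intro hfix
      exact hq2 ⟨q2.out, q2.out_eq, by rw [← permOf_coe c hc]; exact hfix⟩
    have hmem : q2.out ∈ (π.cycleOf q2.out).support :=
      (mem_support_cycleOf_iff).2 ⟨Equiv.Perm.SameCycle.refl _ _, mem_support.2 hs2⟩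
    rw [← h] at hmem
    have hsc : π.SameCycle q1.out q2.out := ((mem_support_cycleOf_iff).1 hmem).1
    have := (mk_eq_mk_iff c hc q1.out q2.out).2 hsc
    rw [q1.out_eq, q2.out_eq] at this
    exact this
  · intro d hd
    have hdc := (mem_cycleFactorsFinset_iff).1 hd
    obtain ⟨x, hx1, -⟩ := hdc.1
    have hxd : x ∈ d.support := mem_support.2 hx1
    have hπx : π x ≠ x := by rw [← hdc.2 x hxd]; exact hx1
    refine ⟨Quotient.mk c.compSetoid x, ?_, ?_⟩
    · simp only [Finset.mem_filter, Finset.mem_univ, true_and]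
      rintro ⟨v, hv, hfix⟩
      have hsc : π.SameCycle v x := (mk_eq_mk_iff c hc v x).1 hv
      have : v ∈ π.support := (hsc.mem_support_iff).2 (mem_support.2 hπx)
      rw [mem_support] at this
      exact this (by rw [permOf_coe c hc] at *; exact hfix)
    · have hout : π.SameCycle (Quotient.mk c.compSetoid x).out x := by
        refine (mk_eq_mk_iff c hc _ _).1 ?_
        exact (Quotient.mk c.compSetoid x).out_eq
      show π.cycleOf (Quotient.mk c.compSetoid x).out = d
      rw [hout.cycleOf_eq]
      exact (cycle_is_cycleOf hxd hd).symm

lemma sign_permOf (hc : c.IsContributor) :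
    ((Equiv.Perm.sign (permOf c) : ℤ)) =
      (-1) ^ ((permOf c).support.card + (permOf c).cycleFactorsFinset.card) := by
  have h := Equiv.Perm.sign_of_cycleType (permOf c)
  have hcard : Multiset.card (permOf c).cycleType = (permOf c).cycleFactorsFinset.card := by
    rw [Equiv.Perm.cycleType_def, Multiset.card_map]; rfl
  rw [Equiv.Perm.sum_cycleType, hcard] at h
  rw [h]
  push_cast
  rfl

end Cycles

section Key

lemma card_filter_and {α : Type*} [Fintype α] (p q : α → Prop) :
    (Finset.univ.filter fun a => p a ∧ q a).card = ((Finset.univ.filter p).filter q).card := by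
  congr 1
  ext a
  simp

lemma key (hsgn : ∀ i : G.I, G.sgn i = 1 ∨ G.sgn i = -1)
    (c : PreContributor G) (hc : c.IsContributor) :
    (∏ v, G.sgn (c.i1 v) * G.sgn (c.i2 v)) = (-1) ^ (PreContributor.oc c + PreContributor.nc c) ∧
    ((Equiv.Perm.sign (permOf c) : ℤ)) * ∏ v, G.sgn (c.i1 v) * G.sgn (c.i2 v) =
      (-1) ^ PreContributor.pc c := by
  set Bs := Finset.univ.filter c.IsBackstepClass with hBs
  set Cir := Finset.univ.filter (fun q : Quotient c.compSetoid => ¬ c.IsBackstepClass q) with hCir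
  set n := Fintype.card V with hn'
  set S := ∑ q ∈ Cir, (fib c q).card with hS
  have hsumBs : ∑ q ∈ Bs, (fib c q).card = Bs.card := by
    rw [Finset.sum_congr rfl (fun q hq => (backstep_sign c hsgn hc
      (Finset.mem_filter.1 hq).2).2), Finset.sum_const, smul_eq_mul, mul_one]
  have hn : n = Bs.card + S := by
    rw [hn', card_univ_eq_sum_fib c,
      ← Finset.sum_filter_add_sum_filter_not Finset.univ c.IsBackstepClass
        (fun q => (fib c q).card), hsumBs]
  have hoc : PreContributor.oc c = (Cir.filter fun q => Odd ((fib c q).card)).card := by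
    rw [PreContributor.oc, natCard_subtype]
    congr 1
    ext q
    simp [hCir, compCard_eq]
  have hnc : PreContributor.nc c = (Cir.filter fun q => c.compSign q = -1).card := by
    rw [PreContributor.nc, natCard_subtype]
    congr 1
    ext q
    simp [hCir]
  have hpc : PreContributor.pc c = (Cir.filter fun q => c.compSign q = 1).card := by
    rw [PreContributor.pc, natCard_subtype]
    congr 1
    ext q
    simp [hCir]
  have htc : PreContributor.pc c + PreContributor.nc c = Cir.card := by
    rw [hpc, hnc]
    rw [← Finset.card_filter_add_card_filter_not
      (s := Cir) (p := fun q => c.compSign q = 1)]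
    congr 2
    refine Finset.filter_congr fun q _ => ?_
    rcases compSign_pm c hsgn q with h | h <;> simp [h]
  have hW : (∏ v, c.walkSign v) = (-1) ^ (Bs.card + PreContributor.nc c) := by
    rw [prod_walkSign_eq,
      ← Finset.prod_filter_mul_prod_filter_not Finset.univ c.IsBackstepClass c.compSign]
    have h1 : ∏ q ∈ Bs, c.compSign q = (-1) ^ Bs.card := by
      rw [Finset.prod_congr rfl (fun q hq => (backstep_sign c hsgn hc
        (Finset.mem_filter.1 hq).2).1), Finset.prod_const]
    have h2 : ∏ q ∈ Cir, c.compSign q = (-1) ^ PreContributor.nc c := by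
      rw [← Finset.prod_filter_mul_prod_filter_not Cir (fun q => c.compSign q = -1) c.compSign]
      have h3 : ∏ q ∈ Cir.filter (fun q => c.compSign q = -1), c.compSign q =
          (-1) ^ PreContributor.nc c := by
        rw [Finset.prod_congr rfl (fun q hq => (Finset.mem_filter.1 hq).2),
          Finset.prod_const, hnc]
      have h4 : ∏ q ∈ Cir.filter (fun q => ¬ c.compSign q = -1), c.compSign q = 1 := by
        refine Finset.prod_eq_one fun q hq => ?_
        rcases compSign_pm c hsgn q with h | h
        · exact h
        · exact absurd h (Finset.mem_filter.1 hq).2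
      rw [h3, h4, mul_one]
    rw [h1, h2, pow_add]
  have hP : (∏ v, G.sgn (c.i1 v) * G.sgn (c.i2 v)) = (-1) ^ n * ∏ v, c.walkSign v := by
    rw [Finset.prod_congr rfl (fun v _ => show G.sgn (c.i1 v) * G.sgn (c.i2 v) =
        (-1) * c.walkSign v by rw [PreContributor.walkSign]; ring),
      Finset.prod_mul_distrib, Finset.prod_const, Finset.card_univ]
  have hSpar : S % 2 = PreContributor.oc c % 2 := by
    rw [hS, sum_card_parity, ← hoc]
  have hQ : Bs.card + Cir.card = Fintype.card (Quotient c.compSetoid) := by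
    rw [hBs, hCir, Finset.card_filter_add_card_filter_not, Finset.card_univ]
  have hF : (FixedCl c).card + (permOf c).support.card = n := card_fixedCl c hc
  have hN : (FixedCl c).card + (Finset.univ.filter fun q : Quotient c.compSetoid =>
      ¬ ∃ v, Quotient.mk c.compSetoid v = q ∧ c.head v = v).card =
      Fintype.card (Quotient c.compSetoid) := by
    rw [FixedCl, Finset.card_filter_add_card_filter_not, Finset.card_univ]
  have hk := card_nontrivialCl c hc
  have hsign := sign_permOf c hc
  constructor
  · rw [hP, hW, ← pow_add]
    exact neg_one_pow_congr (by omega)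
  · rw [hsign, hP, hW, ← pow_add, ← pow_add]
    exact neg_one_pow_congr (by omega)

end Key

section Regroup

lemma fiber_eq (σ : Equiv.Perm V) :
    Finset.univ.filter (fun c : PreContributor G => c.head = ⇑σ) =
      (Finset.univ.filter (fun c : PreContributor G => c.IsContributor)).filter
        (fun c => permOf c = σ) := by
  ext c
  simp only [Finset.mem_filter, Finset.mem_univ, true_and]
  constructor
  · intro h
    exact ⟨isContributor_of_head_eq c h, permOf_eq c h⟩
  · rintro ⟨hctr, rfl⟩
    exact (permOf_coe c hctr).symm

lemma regroup (f : PreContributor G → ℤ) :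
    (∑ σ : Equiv.Perm V, ∑ c ∈ Finset.univ.filter
        (fun c : PreContributor G => c.head = ⇑σ), f c) =
      ∑ c ∈ Finset.univ.filter (fun c : PreContributor G => c.IsContributor), f c := by
  rw [Finset.sum_congr rfl (fun σ _ => by rw [fiber_eq])]
  exact Finset.sum_fiberwise_of_maps_to (fun c _ => Finset.mem_univ _) f

end Regroup

end LapAux


open PreContributor in
/-- For an oriented hypergraph `G` with Laplacian `L_G`,
`perm(L_G) = ∑_{c ∈ C(G)} (−1)^{oc(c)+nc(c)}` and
`det(L_G) = ∑_{c ∈ C(G)} (−1)^{pc(c)}`, where `C(G)` is the set of contributors of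
`G` and `oc`, `nc`, `pc` count odd, negative, and positive circles of `c`. -/
theorem lap_perm_det_contributors {V : Type} [Fintype V] [DecidableEq V]
    (G : OrientedHypergraph V) (hsgn : ∀ i, G.sgn i = 1 ∨ G.sgn i = -1) :
    G.lap.permanent =
      (∑ᶠ c ∈ {c : PreContributor G | c.IsContributor}, (-1 : ℤ) ^ (oc c + nc c)) ∧
    G.lap.det =
      (∑ᶠ c ∈ {c : PreContributor G | c.IsContributor}, (-1 : ℤ) ^ pc c) := by
  classical
  have hset : {c : PreContributor G | c.IsContributor} =
      ↑(Finset.univ.filter fun c : PreContributor G => c.IsContributor) := by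
    ext c; simp
  have htr : ∀ σ : Equiv.Perm V, ∏ i, G.lap.transpose (σ i) i = ∏ v, G.lap v (σ v) := by
    intro σ
    simp [Matrix.transpose_apply]
  constructor
  · rw [hset, finsum_mem_coe_finset, ← Matrix.permanent_transpose, Matrix.permanent]
    rw [← LapAux.regroup (G := G) (fun c => (-1) ^ (oc c + nc c))]
    refine Finset.sum_congr rfl fun σ _ => ?_
    rw [htr σ, LapAux.prod_lap σ]
    refine Finset.sum_congr rfl fun c hc => ?_
    have hhead : c.head = ⇑σ := (Finset.mem_filter.1 hc).2
    exact (LapAux.key hsgn c (LapAux.isContributor_of_head_eq c hhead)).1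
  · rw [hset, finsum_mem_coe_finset, ← Matrix.det_transpose, Matrix.det_apply']
    rw [← LapAux.regroup (G := G) (fun c => (-1) ^ pc c)]
    refine Finset.sum_congr rfl fun σ _ => ?_
    rw [htr σ, LapAux.prod_lap σ, Finset.mul_sum]
    refine Finset.sum_congr rfl fun c hc => ?_
    have hhead : c.head = ⇑σ := (Finset.mem_filter.1 hc).2
    have hco := LapAux.isContributor_of_head_eq c hhead
    have hkey := (LapAux.key hsgn c hco).2
    rw [LapAux.permOf_eq c hhead] at hkey
    rw [← hkey]
    norm_cast
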